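/- Let K be a natural number, let \eta_{-1}, \eta_0, \eta_1, ..., \eta_K be positive reals, let s > 0, \mu > 0, C_I > 0 and \varepsilon > 0, and define F_k := (\eta_k^{-s} + \eta_{k-1}^{-s}) \eta_{k-1}^{-1}, G_K := \sum_{k=0}^{K} F_k^{\mu/(\mu+1)} \eta_{k-1}, and M_{K-k}^* := (2 C_I G_K)^{1/\mu} F_k^{-1/(\mu+1)} \varepsilon^{-1/\mu}. Then the rounded-up sample numbers satisfy \sum_{k=0}^{K} \lceil M_{K-k}^* \rceil (\eta_k^{-s} + \eta_{k-1}^{-s}) \le (2 C_I)^{1/\mu} G_K^{(\mu+1)/\mu} \varepsilon^{-1/\mu} + \sum_{k=0}^{K} F_k \eta_{k-1}, and moreover \sum_{k=0}^{K} C_I \lceil M_{K-k}^* \rceil^{-\mu} \eta_{k-1} \le \varepsilon / 2. -/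

import Mathlib

open Finset

/-- The rounded-up optimal sample numbers yield the ε-cost estimate and still
satisfy the stochastic error budget. -/
theorem rounded_samples_cost_and_budget
    (K : ℕ) (η : ℤ → ℝ) (s μ CI ε : ℝ)
    (hη : ∀ k : ℤ, -1 ≤ k → k ≤ K → 0 < η k)
    (hs : 0 < s) (hμ : 0 < μ) (hCI : 0 < CI) (hε : 0 < ε)
    (F : ℕ → ℝ)
    (hF : ∀ k : ℕ,
      F k = (η (k : ℤ) ^ (-s) + η ((k : ℤ) - 1) ^ (-s)) * (η ((k : ℤ) - 1))⁻¹)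
    (G : ℝ)
    (hG : G = ∑ k ∈ range (K + 1), F k ^ (μ / (μ + 1)) * η ((k : ℤ) - 1))
    (M : ℕ → ℝ)
    (hM : ∀ k : ℕ,
      M k = (2 * CI * G) ^ (1 / μ) * F k ^ (-(1 / (μ + 1))) * ε ^ (-(1 / μ))) :
    (∑ k ∈ range (K + 1),
        (⌈M k⌉₊ : ℝ) * (η (k : ℤ) ^ (-s) + η ((k : ℤ) - 1) ^ (-s)) ≤
      (2 * CI) ^ (1 / μ) * G ^ ((μ + 1) / μ) * ε ^ (-(1 / μ)) +
        ∑ k ∈ range (K + 1), F k * η ((k : ℤ) - 1)) ∧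
    ∑ k ∈ range (K + 1), CI * (⌈M k⌉₊ : ℝ) ^ (-μ) * η ((k : ℤ) - 1) ≤ ε / 2 := by
  have hμ1 : 0 < μ + 1 := by linarith
  have hηN : ∀ k ∈ range (K+1), 0 < η ((k:ℤ)-1) ∧ 0 < η (k:ℤ) := by
    intro k hk
    simp only [mem_range] at hk
    exact ⟨hη _ (by omega) (by omega), hη _ (by omega) (by omega)⟩
  have hFpos : ∀ k ∈ range (K+1), 0 < F k := by
    intro k hk
    obtain ⟨h1, h2⟩ := hηN k hk
    rw [hF]
    positivity
  have hGpos : 0 < G := by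
    rw [hG]
    apply Finset.sum_pos
    · intro k hk
      obtain ⟨h1, _⟩ := hηN k hk
      have := hFpos k hk
      positivity
    · exact nonempty_range_iff.mpr (Nat.succ_ne_zero K)
  have h2CIG : 0 < 2 * CI * G := by positivity
  have hMpos : ∀ k ∈ range (K+1), 0 < M k := by
    intro k hk
    have := hFpos k hk
    rw [hM]
    positivity
  have hMpow : ∀ k ∈ range (K+1),
      M k ^ (-μ) = (2*CI*G)⁻¹ * F k ^ (μ/(μ+1)) * ε := by
    intro k hk
    have hFk := hFpos k hk
    rw [hM,
        Real.mul_rpow (by positivity) (by positivity),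
        Real.mul_rpow (by positivity) (by positivity),
        ← Real.rpow_mul h2CIG.le, ← Real.rpow_mul hFk.le, ← Real.rpow_mul hε.le,
        show 1/μ * (-μ) = -1 by field_simp,
        show -(1/(μ+1)) * (-μ) = μ/(μ+1) by field_simp,
        show -(1/μ) * (-μ) = 1 by field_simp,
        Real.rpow_neg_one, Real.rpow_one]
  have hMF : ∀ k ∈ range (K+1),
      M k * F k = (2*CI*G) ^ (1/μ) * ε ^ (-(1/μ)) * F k ^ (μ/(μ+1)) := by
    intro k hk
    have hFk := hFpos k hk
    rw [hM]
    have : F k ^ (-(1/(μ+1))) * F k = F k ^ (μ/(μ+1)) := by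
      nth_rewrite 2 [← Real.rpow_one (F k)]
      rw [← Real.rpow_add hFk]
      congr 1
      field_simp
      ring
    calc (2*CI*G) ^ (1/μ) * F k ^ (-(1/(μ+1))) * ε ^ (-(1/μ)) * F k
        = (2*CI*G) ^ (1/μ) * ε ^ (-(1/μ)) * (F k ^ (-(1/(μ+1))) * F k) := by ring
      _ = (2*CI*G) ^ (1/μ) * ε ^ (-(1/μ)) * F k ^ (μ/(μ+1)) := by rw [this]
  have hB : ∀ k ∈ range (K+1),
      η (k:ℤ) ^ (-s) + η ((k:ℤ)-1) ^ (-s) = F k * η ((k:ℤ)-1) := by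
    intro k hk
    obtain ⟨h1, _⟩ := hηN k hk
    rw [hF]
    field_simp
  constructor
  · -- cost estimate
    have step1 : ∑ k ∈ range (K+1),
        (⌈M k⌉₊ : ℝ) * (η (k:ℤ) ^ (-s) + η ((k:ℤ)-1) ^ (-s)) ≤
        ∑ k ∈ range (K+1),
        (M k + 1) * (η (k:ℤ) ^ (-s) + η ((k:ℤ)-1) ^ (-s)) := by
      apply Finset.sum_le_sum
      intro k hk
      obtain ⟨h1, h2⟩ := hηN k hk
      have hceil : (⌈M k⌉₊ : ℝ) ≤ M k + 1 := (Nat.ceil_lt_add_one (hMpos k hk).le).le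
      have hBpos : 0 ≤ η (k:ℤ) ^ (-s) + η ((k:ℤ)-1) ^ (-s) := by positivity
      exact mul_le_mul_of_nonneg_right hceil hBpos
    have step2 : ∑ k ∈ range (K+1),
        (M k + 1) * (η (k:ℤ) ^ (-s) + η ((k:ℤ)-1) ^ (-s)) =
        (2 * CI) ^ (1/μ) * G ^ ((μ+1)/μ) * ε ^ (-(1/μ)) +
        ∑ k ∈ range (K+1), F k * η ((k:ℤ)-1) := by
      have hsum : ∑ k ∈ range (K+1),
          (M k + 1) * (η (k:ℤ) ^ (-s) + η ((k:ℤ)-1) ^ (-s)) =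
          ∑ k ∈ range (K+1),
          ((2*CI*G) ^ (1/μ) * ε ^ (-(1/μ)) * (F k ^ (μ/(μ+1)) * η ((k:ℤ)-1))
            + F k * η ((k:ℤ)-1)) := by
        apply Finset.sum_congr rfl
        intro k hk
        rw [hB k hk]
        have := hMF k hk
        calc (M k + 1) * (F k * η ((k:ℤ)-1))
            = (M k * F k) * η ((k:ℤ)-1) + F k * η ((k:ℤ)-1) := by ring
          _ = ((2*CI*G) ^ (1/μ) * ε ^ (-(1/μ)) * F k ^ (μ/(μ+1))) * η ((k:ℤ)-1)
              + F k * η ((k:ℤ)-1) := by rw [this]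
          _ = (2*CI*G) ^ (1/μ) * ε ^ (-(1/μ)) * (F k ^ (μ/(μ+1)) * η ((k:ℤ)-1))
              + F k * η ((k:ℤ)-1) := by ring
      rw [hsum, Finset.sum_add_distrib, ← Finset.mul_sum, ← hG]
      congr 1
      have hmul : (2*CI*G) ^ (1/μ) = (2*CI) ^ (1/μ) * G ^ (1/μ) :=
        Real.mul_rpow (by positivity) hGpos.le
      have hGG : G ^ (1/μ) * G = G ^ ((μ+1)/μ) := by
        nth_rewrite 2 [← Real.rpow_one G]
        rw [← Real.rpow_add hGpos]
        congr 1
        field_simp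
        ring
      calc (2*CI*G) ^ (1/μ) * ε ^ (-(1/μ)) * G
          = (2*CI) ^ (1/μ) * ε ^ (-(1/μ)) * (G ^ (1/μ) * G) := by rw [hmul]; ring
        _ = (2*CI) ^ (1/μ) * G ^ ((μ+1)/μ) * ε ^ (-(1/μ)) := by rw [hGG]; ring
    linarith [step1, step2.le]
  · -- error budget
    calc ∑ k ∈ range (K+1), CI * (⌈M k⌉₊ : ℝ) ^ (-μ) * η ((k:ℤ)-1)
        ≤ ∑ k ∈ range (K+1), CI * M k ^ (-μ) * η ((k:ℤ)-1) := by
          apply Finset.sum_le_sum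
          intro k hk
          have hMk := hMpos k hk
          have hceil : M k ≤ (⌈M k⌉₊ : ℝ) := Nat.le_ceil _
          have hmono : (⌈M k⌉₊ : ℝ) ^ (-μ) ≤ M k ^ (-μ) :=
            Real.rpow_le_rpow_of_nonpos hMk hceil (by linarith)
          exact mul_le_mul_of_nonneg_right
            (mul_le_mul_of_nonneg_left hmono hCI.le) (hηN k hk).1.le
      _ = ∑ k ∈ range (K+1),
          CI * (2*CI*G)⁻¹ * ε * (F k ^ (μ/(μ+1)) * η ((k:ℤ)-1)) := by
          apply Finset.sum_congr rfl
          intro k hk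
          rw [hMpow k hk]; ring
      _ = CI * (2*CI*G)⁻¹ * ε * G := by rw [← Finset.mul_sum, ← hG]
      _ = ε / 2 := by field_simp
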